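/- arXiv:1812.11448 — 2 statements merged into one kernel-verified Lean document; each statement's English description precedes it below -/
import Mathlib

section
/- Let G = (V,E) be a graph with maximum independent set K, and consider the loss L(S) = (α₁/2)|S| + (α₃/4)·2·e(V∖S) over subsets S ⊆ V of removed nodes, where e(W) denotes the number of edges with both endpoints in W. If α₃ > 2α₁·|V|, then S = V∖K minimizes L, i.e., keeping exactly the nodes of a maximum independent set is optimal. -/
/-- A set of vertices is independent if no two of its members are adjacent. -/
def IsIndepSet {V : Type*} (G : SimpleGraph V) (s : Set V) : Prop :=
  s.Pairwise fun a b => ¬ G.Adj a b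

/-- Number of ordered pairs `(i, j)` with `i, j ∈ W` and `i ∼ j`; this equals twice the
number of undirected edges within `W`. -/
def orderedEdgesWithin {V : Type*} [Fintype V] [DecidableEq V] (G : SimpleGraph V)
    [DecidableRel G.Adj] (W : Finset V) : ℕ :=
  (Finset.univ.filter fun p : V × V => p.1 ∈ W ∧ p.2 ∈ W ∧ G.Adj p.1 p.2).card

lemma indep_edges_zero {V : Type*} [Fintype V] [DecidableEq V] (G : SimpleGraph V)
    [DecidableRel G.Adj] (K : Finset V) (hK : IsIndepSet G ↑K) :
    orderedEdgesWithin G K = 0 := by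
  unfold orderedEdgesWithin
  rw [Finset.card_eq_zero, Finset.filter_eq_empty_iff]
  rintro ⟨i, j⟩ -
  rintro ⟨hi, hj, hadj⟩
  exact hK hi hj hadj.ne hadj

lemma notindep_edges_two {V : Type*} [Fintype V] [DecidableEq V] (G : SimpleGraph V)
    [DecidableRel G.Adj] (W : Finset V) (h : ¬ IsIndepSet G ↑W) :
    2 ≤ orderedEdgesWithin G W := by
  simp only [IsIndepSet, Set.Pairwise, not_forall] at h
  obtain ⟨i, hi, j, hj, hne, hadj⟩ := h
  simp only [not_not] at hadj
  have hi' : i ∈ W := hi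
  have hj' : j ∈ W := hj
  have hsub : ({(i, j), (j, i)} : Finset (V × V)) ⊆
      Finset.univ.filter fun p : V × V => p.1 ∈ W ∧ p.2 ∈ W ∧ G.Adj p.1 p.2 := by
    intro p hp
    simp only [Finset.mem_insert, Finset.mem_singleton] at hp
    rcases hp with rfl | rfl <;>
      simp [hi', hj', hadj, hadj.symm]
  have hcard : ({(i, j), (j, i)} : Finset (V × V)).card = 2 := by
    rw [Finset.card_insert_of_notMem (by simp [hne]), Finset.card_singleton]
  calc 2 = ({(i, j), (j, i)} : Finset (V × V)).card := hcard.symm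
    _ ≤ _ := Finset.card_le_card hsub

theorem stmt_13 {V : Type*} [Fintype V] [DecidableEq V] (G : SimpleGraph V)
    [DecidableRel G.Adj]
    (K : Finset V) (hK : IsIndepSet G ↑K)
    (hmax : ∀ K' : Finset V, IsIndepSet G ↑K' → K'.card ≤ K.card)
    (α₁ α₃ : ℝ) (h1 : 0 < α₁) (h3 : 0 < α₃)
    (hα : 2 * α₁ * Fintype.card V < α₃)
    (L : Finset V → ℝ)
    (hL : ∀ S : Finset V,
      L S = α₁ / 2 * S.card + α₃ / 4 * orderedEdgesWithin G Sᶜ) :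
    ∀ S : Finset V, L Kᶜ ≤ L S := by
  intro S
  have hn : (Kᶜ : Finset V).card ≤ Fintype.card V := Finset.card_le_univ _
  have hLK : L Kᶜ = α₁ / 2 * (Kᶜ : Finset V).card := by
    rw [hL, compl_compl, indep_edges_zero G K hK]
    simp
  by_cases hS : IsIndepSet G ↑(Sᶜ : Finset V)
  · -- Sᶜ independent, so |Sᶜ| ≤ |K|, hence |S| ≥ |Kᶜ|
    have hcard : (Sᶜ : Finset V).card ≤ K.card := hmax _ hS
    have hScard : (Kᶜ : Finset V).card ≤ S.card := by
      rw [Finset.card_compl]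
      have := Finset.card_compl (α := V) S
      omega
    rw [hLK, hL S]
    have : (α₁ / 2) * ((Kᶜ : Finset V).card : ℝ) ≤ (α₁ / 2) * S.card := by
      apply mul_le_mul_of_nonneg_left _ (by linarith)
      exact_mod_cast hScard
    have hnn : (0:ℝ) ≤ α₃ / 4 * (orderedEdgesWithin G Sᶜ : ℝ) := by positivity
    linarith
  · -- Sᶜ not independent: at least 2 ordered edges
    have h2 : (2:ℝ) ≤ (orderedEdgesWithin G Sᶜ : ℝ) := by
      exact_mod_cast notindep_edges_two G _ hS
    rw [hLK, hL S]
    have hKn : ((Kᶜ : Finset V).card : ℝ) ≤ (Fintype.card V : ℝ) := by exact_mod_cast hn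
    have hSnn : (0:ℝ) ≤ (S.card : ℝ) := by positivity
    nlinarith
end

section
/- Let G = (V,E) be a finite simple graph and α₁, α₃ > 0 with α₃ > 2α₁·|V|. Define L(K) = (α₁/2)(|V| - |K|) + (α₃/2)·e(K) over subsets K ⊆ V of retained nodes, where e(K) is the number of edges within K. If K minimizes L, then K is a maximum independent set of G. -/
lemma indep_zero {V : Type*} [Fintype V] [DecidableEq V] (G : SimpleGraph V)
    [DecidableRel G.Adj] (W : Finset V) (h : IsIndepSet G ↑W) :
    orderedEdgesWithin G W = 0 := by
  unfold orderedEdgesWithin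
  rw [Finset.card_eq_zero, Finset.filter_eq_empty_iff]
  rintro p - ⟨h1, h2, h3⟩
  exact h (Finset.mem_coe.mpr h1) (Finset.mem_coe.mpr h2) (G.ne_of_adj h3) h3

theorem stmt_14 {V : Type*} [Fintype V] [DecidableEq V] (G : SimpleGraph V)
    [DecidableRel G.Adj]
    (α₁ α₃ : ℝ) (h1 : 0 < α₁) (h3 : 0 < α₃)
    (hα : 2 * α₁ * Fintype.card V < α₃)
    (L : Finset V → ℝ)
    (hL : ∀ K : Finset V,
      L K = α₁ / 2 * ((Fintype.card V : ℝ) - K.card) + α₃ / 4 * orderedEdgesWithin G K)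
    (K : Finset V) (hmin : ∀ K' : Finset V, L K ≤ L K') :
    IsIndepSet G ↑K ∧ ∀ K' : Finset V, IsIndepSet G ↑K' → K'.card ≤ K.card := by
  have hindep : IsIndepSet G ↑K := by
    intro a ha b hb hab hadj
    simp only [Finset.mem_coe] at ha hb
    have hcard1 : 1 ≤ Fintype.card V := Fintype.card_pos_iff.mpr ⟨a⟩
    set K' := K.erase a with hK'def
    have hm : orderedEdgesWithin G K' + 2 ≤ orderedEdgesWithin G K := by
      unfold orderedEdgesWithin
      have hsub : insert ((a, b) : V × V) (insert (b, a)
          (Finset.univ.filter fun p : V × V => p.1 ∈ K' ∧ p.2 ∈ K' ∧ G.Adj p.1 p.2)) ⊆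
          Finset.univ.filter fun p : V × V => p.1 ∈ K ∧ p.2 ∈ K ∧ G.Adj p.1 p.2 := by
        intro p hp
        simp only [Finset.mem_insert, Finset.mem_filter, Finset.mem_univ, true_and] at hp ⊢
        rcases hp with rfl | rfl | ⟨h1', h2', h3'⟩
        · exact ⟨ha, hb, hadj⟩
        · exact ⟨hb, ha, hadj.symm⟩
        · exact ⟨Finset.mem_of_mem_erase h1', Finset.mem_of_mem_erase h2', h3'⟩
      have hcard := Finset.card_le_card hsub
      rw [Finset.card_insert_of_notMem, Finset.card_insert_of_notMem] at hcard
      · omega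
      · simp [hK'def, Finset.mem_erase]
      · simp only [Finset.mem_insert, Prod.mk.injEq, Finset.mem_filter, Finset.mem_univ,
          true_and, hK'def, Finset.mem_erase]
        push_neg
        exact ⟨fun h => absurd h hab, fun h _ _ => absurd rfl h.1⟩
    have hKa : K'.card + 1 = K.card := Finset.card_erase_add_one ha
    have hle := hmin K'
    rw [hL K, hL K'] at hle
    have hm' : (orderedEdgesWithin G K' : ℝ) + 2 ≤ orderedEdgesWithin G K := by
      exact_mod_cast hm
    have hcK : (K'.card : ℝ) + 1 = K.card := by exact_mod_cast hKa
    have hn : (1 : ℝ) ≤ Fintype.card V := by exact_mod_cast hcard1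
    rw [← hcK] at hle
    nlinarith [mul_le_mul_of_nonneg_left hm' (by positivity : (0:ℝ) ≤ α₃ / 4),
      mul_le_mul_of_nonneg_left hn h1.le]
  refine ⟨hindep, fun K' hK' => ?_⟩
  have hle := hmin K'
  rw [hL K, hL K', indep_zero G K hindep, indep_zero G K' hK'] at hle
  simp only [Nat.cast_zero, mul_zero, add_zero] at hle
  by_contra hlt
  push_neg at hlt
  have hlt' : (K.card : ℝ) < K'.card := by exact_mod_cast hlt
  nlinarith
end
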